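/- Fix k ∈ {2, 3, 4, 6} and n ≥ 3, and let μ_k ⊆ ℂˣ be the group of k-th roots of unity. Let B be an alternating ℂ-bilinear form on V = (ℂ×ℂ)^n such that B(T_{a,σ} v, T_{a,σ} w) = B(v, w) for every a : Fin n → μ_k with ∏_i a(i) = 1, every even permutation σ of Fin n, and all v, w ∈ V. Then there exists c ∈ ℂ with B = c·ω; in particular the space of such invariant alternating forms is one-dimensional. (This computes h^{2,0}(Z) = 1 for Z = E^{2n}/Γ′ with Γ′ = {(a₁,…,aₙ,τ) ∈ G^n ⋊ S_n : a₁⋯aₙ = 1, τ ∈ A_n}, showing Z is a primitively symplectic V-manifold.) -/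

import Mathlib

open scoped BigOperators

/-- The linear map `T_{a,σ}` on `(ℂ×ℂ)ⁿ`:
`(T_{a,σ} v)_i = (a(σ⁻¹ i)·(v(σ⁻¹ i))₁, a(σ⁻¹ i)⁻¹·(v(σ⁻¹ i))₂)`. -/
def Tmap {n : ℕ} (a : Fin n → ℂˣ) (σ : Equiv.Perm (Fin n))
    (v : Fin n → ℂ × ℂ) : Fin n → ℂ × ℂ :=
  fun i => ((a (σ⁻¹ i) : ℂ) * (v (σ⁻¹ i)).1, (((a (σ⁻¹ i))⁻¹ : ℂˣ) : ℂ) * (v (σ⁻¹ i)).2)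

/-- The standard symplectic form `ω(v,w) = Σᵢ ((v i)₁(w i)₂ − (v i)₂(w i)₁)`. -/
noncomputable def omegaForm {n : ℕ} (v w : Fin n → ℂ × ℂ) : ℂ :=
  ∑ i, ((v i).1 * (w i).2 - (v i).2 * (w i).1)

theorem stmt19 (k : ℕ) (hk : k ∈ ({2, 3, 4, 6} : Set ℕ)) {n : ℕ} (hn : 3 ≤ n)
    (B : (Fin n → ℂ × ℂ) →ₗ[ℂ] (Fin n → ℂ × ℂ) →ₗ[ℂ] ℂ)
    (hBalt : ∀ v, B v v = 0)
    (hBinv : ∀ a : Fin n → ℂˣ, (∀ i, a i ^ k = 1) → (∏ i, a i) = 1 →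
      ∀ σ : Equiv.Perm (Fin n), Equiv.Perm.sign σ = 1 →
        ∀ v w, B (Tmap a σ v) (Tmap a σ w) = B v w) :
    ∃ c : ℂ, ∀ v w, B v w = c * omegaForm v w := by
  classical
  haveI : NeZero n := ⟨by omega⟩
  have hk2 : 2 ≤ k := by
    simp only [Set.mem_insert_iff, Set.mem_singleton_iff] at hk
    rcases hk with h|h|h|h <;> omega
  have hk0 : k ≠ 0 := by omega
  -- a k-th root of unity ≠ 1
  obtain ⟨z, hzk, hz1⟩ : ∃ z : ℂ, z ^ k = 1 ∧ z ≠ 1 := by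
    have h := Complex.isPrimitiveRoot_exp k hk0
    refine ⟨_, h.pow_eq_one, ?_⟩
    intro hz
    rw [hz] at h
    have h1 : k ∣ 1 := h.dvd_of_pow_eq_one 1 (by simp)
    have := Nat.le_of_dvd one_pos h1
    omega
  have hmul : z * z ^ (k - 1) = 1 := by
    have : z * z ^ (k - 1) = z ^ k := by
      rw [← pow_succ']
      congr 1
      omega
    rw [this, hzk]
  set ζ : ℂˣ := Units.mkOfMulEqOne z (z ^ (k - 1)) hmul with hζdef
  have hζval : (ζ : ℂ) = z := rfl
  have hζk : ζ ^ k = 1 := by ext; push_cast [hζval]; exact hzk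
  have hζ1 : (ζ : ℂ) ≠ 1 := by rw [hζval]; exact hz1
  have hζinv1 : ((ζ⁻¹ : ℂˣ) : ℂ) ≠ 1 := by
    intro h
    have : ζ⁻¹ = 1 := Units.ext (by simpa using h)
    rw [inv_eq_one] at this
    exact hζ1 (by rw [this]; rfl)
  -- skew symmetry
  have hskew : ∀ v w, B v w = - B w v := by
    intro v w
    have h := hBalt (v + w)
    simp only [map_add, LinearMap.add_apply, hBalt] at h
    linear_combination h
  -- third index
  have third : ∀ i j : Fin n, ∃ l : Fin n, l ≠ i ∧ l ≠ j := by
    intro i j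
    by_contra h
    push_neg at h
    have hsub : (Finset.univ : Finset (Fin n)) ⊆ {i, j} := by
      intro l _
      rcases eq_or_ne l i with h'|h'
      · simp [h']
      · simp [h l h']
    have hc := Finset.card_le_card hsub
    have : ({i, j} : Finset (Fin n)).card ≤ 2 :=
      (Finset.card_insert_le _ _).trans (by simp)
    simp [Finset.card_univ] at hc
    omega
  -- action of Tmap on Pi.single
  have hTsingle : ∀ (a : Fin n → ℂˣ) (σ : Equiv.Perm (Fin n)) (j : Fin n) (x : ℂ × ℂ),
      Tmap a σ (Pi.single j x)
        = Pi.single (σ j) ((a j : ℂ) * x.1, (((a j)⁻¹ : ℂˣ) : ℂ) * x.2) := by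
    intro a σ j x
    funext i
    by_cases h : σ⁻¹ i = j
    · have hi : i = σ j := by rw [← h]; simp
      simp only [Tmap]
      rw [h, hi, Pi.single_eq_same, Pi.single_eq_same]
    · have h2 : i ≠ σ j := by
        intro hh; exact h (by rw [hh]; simp)
      simp [Tmap, Pi.single_apply, h, h2, show ¬ (Equiv.symm σ) i = j from h]
  -- decomposition of single
  have hdecomp : ∀ (i : Fin n) (x : ℂ × ℂ),
      (Pi.single i x : Fin n → ℂ × ℂ)
        = x.1 • (Pi.single i ((1:ℂ), (0:ℂ)) : Fin n → ℂ × ℂ)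
          + x.2 • (Pi.single i ((0:ℂ), (1:ℂ)) : Fin n → ℂ × ℂ) := by
    intro i x
    funext m
    rcases eq_or_ne m i with h|h <;>
      simp [h, Pi.single_apply, Prod.ext_iff, Prod.smul_mk]
  -- off-diagonal vanishing
  have key : ∀ i j : Fin n, i ≠ j → ∀ x y : ℂ × ℂ,
      B (Pi.single i x) (Pi.single j y) = 0 := by
    intro i j hij x y
    obtain ⟨l, hli, hlj⟩ := third i j
    set a : Fin n → ℂˣ := Pi.mulSingle i ζ * Pi.mulSingle l ζ⁻¹ with ha
    have hai : a i = ζ := by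
      simp [ha, Pi.mulSingle_apply, Ne.symm hli]
    have haj : a j = 1 := by
      simp [ha, Pi.mulSingle_apply, Ne.symm hij, Ne.symm hlj]
    have hak : ∀ m, a m ^ k = 1 := by
      intro m
      simp only [ha, Pi.mul_apply, Pi.mulSingle_apply]
      split_ifs <;> simp [hζk]
    have haprod : ∏ m, a m = 1 := by
      rw [ha]
      simp only [Pi.mul_apply]
      rw [Finset.prod_mul_distrib]
      rw [Finset.prod_eq_single i (fun m _ hm => Pi.mulSingle_eq_of_ne hm _) (by simp),
        Finset.prod_eq_single l (fun m _ hm => Pi.mulSingle_eq_of_ne hm _) (by simp)]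
      simp
    have inv := fun (x' : ℂ × ℂ) =>
      hBinv a hak haprod 1 (by simp) (Pi.single i x') (Pi.single j y)
    have hTj : Tmap a 1 (Pi.single j y) = Pi.single j y := by
      rw [hTsingle]; simp [haj]
    have hTi : ∀ x' : ℂ × ℂ, Tmap a 1 (Pi.single i x')
        = Pi.single i ((ζ : ℂ) * x'.1, ((ζ⁻¹ : ℂˣ) : ℂ) * x'.2) := by
      intro x'
      rw [hTsingle]; simp [hai]
    -- first component vanishing
    have h1 : B (Pi.single i ((x.1 : ℂ), (0:ℂ))) (Pi.single j y) = 0 := by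
      have h := inv (x.1, 0)
      rw [hTi, hTj] at h
      simp only [mul_zero] at h
      have hsm : (Pi.single i ((ζ : ℂ) * x.1, (0:ℂ)) : Fin n → ℂ × ℂ)
          = (ζ : ℂ) • (Pi.single i ((x.1 : ℂ), (0:ℂ)) : Fin n → ℂ × ℂ) := by
        funext m
        rcases eq_or_ne m i with h'|h' <;>
          simp [h', Pi.single_apply, Prod.ext_iff, Prod.smul_mk]
      rw [hsm, map_smul, LinearMap.smul_apply, smul_eq_mul] at h
      have : ((ζ : ℂ) - 1) * B (Pi.single i ((x.1 : ℂ), (0:ℂ))) (Pi.single j y) = 0 := by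
        linear_combination h
      rcases mul_eq_zero.mp this with h'|h'
      · exact absurd (by linear_combination h') hζ1
      · exact h'
    have h2 : B (Pi.single i ((0:ℂ), (x.2 : ℂ))) (Pi.single j y) = 0 := by
      have h := inv (0, x.2)
      rw [hTi, hTj] at h
      simp only [mul_zero] at h
      have hsm : (Pi.single i ((0:ℂ), ((ζ⁻¹ : ℂˣ) : ℂ) * x.2) : Fin n → ℂ × ℂ)
          = ((ζ⁻¹ : ℂˣ) : ℂ) • (Pi.single i ((0:ℂ), (x.2 : ℂ)) : Fin n → ℂ × ℂ) := by
        funext m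
        rcases eq_or_ne m i with h'|h' <;>
          simp [h', Pi.single_apply, Prod.ext_iff, Prod.smul_mk]
      rw [hsm, map_smul, LinearMap.smul_apply, smul_eq_mul] at h
      have : (((ζ⁻¹ : ℂˣ) : ℂ) - 1) * B (Pi.single i ((0:ℂ), (x.2 : ℂ))) (Pi.single j y) = 0 := by
        linear_combination h
      rcases mul_eq_zero.mp this with h'|h'
      · exact absurd (by linear_combination h') hζinv1
      · exact h'
    have hx : (Pi.single i x : Fin n → ℂ × ℂ)
        = Pi.single i ((x.1 : ℂ), (0:ℂ)) + Pi.single i ((0:ℂ), (x.2:ℂ)) := by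
      funext m
      rcases eq_or_ne m i with h'|h' <;>
        simp [h', Pi.single_apply, Prod.ext_iff]
    rw [hx, map_add, LinearMap.add_apply, h1, h2, add_zero]
  -- basis vectors
  set e : Fin n → (Fin n → ℂ × ℂ) := fun i => Pi.single i ((1:ℂ), (0:ℂ)) with he
  set f : Fin n → (Fin n → ℂ × ℂ) := fun i => Pi.single i ((0:ℂ), (1:ℂ)) with hf
  set c : ℂ := B (e 0) (f 0) with hc
  -- all diagonal coefficients equal
  have hperm : ∀ i : Fin n, B (e i) (f i) = c := by
    intro i
    by_cases hi : i = (0 : Fin n)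
    · rw [hi]
    obtain ⟨l, hl0, hli⟩ := third 0 i
    have h0l : (0 : Fin n) ≠ l := Ne.symm hl0
    have h0i : (0 : Fin n) ≠ i := Ne.symm hi
    set σ : Equiv.Perm (Fin n) := Equiv.swap 0 l * Equiv.swap 0 i with hσ
    have hsign : Equiv.Perm.sign σ = 1 := by
      rw [hσ, map_mul, Equiv.Perm.sign_swap h0l, Equiv.Perm.sign_swap h0i]
      decide
    have hσ0 : σ (0 : Fin n) = i := by
      rw [hσ]
      simp only [Equiv.Perm.mul_apply]
      rw [Equiv.swap_apply_left, Equiv.swap_apply_of_ne_of_ne (Ne.symm h0i) (Ne.symm hli)]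
    have h := hBinv (fun _ => 1) (by simp) (by simp) σ hsign (e 0) (f 0)
    rw [he, hf] at h
    rw [hTsingle, hTsingle, hσ0] at h
    rw [hc, he, hf]
    simpa using h
  -- diagonal values
  have diag : ∀ (i : Fin n) (x y : ℂ × ℂ),
      B (Pi.single i x) (Pi.single i y) = (x.1 * y.2 - x.2 * y.1) * c := by
    intro i x y
    rw [hdecomp i x, hdecomp i y]
    simp only [map_add, map_smul, LinearMap.add_apply, LinearMap.smul_apply, smul_eq_mul]
    have hee : B (Pi.single i ((1:ℂ),(0:ℂ))) (Pi.single i ((1:ℂ),(0:ℂ))) = 0 := hBalt _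
    have hff : B (Pi.single i ((0:ℂ),(1:ℂ))) (Pi.single i ((0:ℂ),(1:ℂ))) = 0 := hBalt _
    have hef : B (Pi.single i ((1:ℂ),(0:ℂ))) (Pi.single i ((0:ℂ),(1:ℂ))) = c := hperm i
    have hfe : B (Pi.single i ((0:ℂ),(1:ℂ))) (Pi.single i ((1:ℂ),(0:ℂ))) = -c := by
      rw [hskew]
      rw [hef]
    rw [hee, hff, hef, hfe]
    ring
  refine ⟨c, fun v w => ?_⟩
  have hv : v = ∑ i, Pi.single i (v i) := (Finset.univ_sum_single v).symm
  have hw : w = ∑ i, Pi.single i (w i) := (Finset.univ_sum_single w).symm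
  have expand : B v w = ∑ i : Fin n, ∑ j : Fin n,
      B (Pi.single i (v i)) (Pi.single j (w j)) := by
    conv_lhs => rw [hv, hw]
    simp only [map_sum, LinearMap.sum_apply]
    rw [Finset.sum_comm]
  rw [expand]
  have hinner : ∀ i : Fin n,
      ∑ j : Fin n, B (Pi.single i (v i)) (Pi.single j (w j))
        = ((v i).1 * (w i).2 - (v i).2 * (w i).1) * c := by
    intro i
    rw [Finset.sum_eq_single_of_mem i (Finset.mem_univ i)
      (fun j _ hj => key i j (Ne.symm hj) _ _)]
    exact diag i _ _
  rw [Finset.sum_congr rfl (fun i _ => hinner i)]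
  rw [omegaForm, Finset.mul_sum]
  exact Finset.sum_congr rfl (fun i _ => by ring)
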